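/- Let F(ρ) = Tr_Z(A ρ A†) for a matrix A : C^{d_X} → C^{d_Y} ⊗ C^{d_Z}. Then the partially transposed Choi matrix satisfies Λ_F^{T1} = (I_X ⊗ I_Y ⊗ ⟨Φ^+|)(I_X ⊗ A ⊗ I_Z)(S ⊗ I_{ZZ})(I_X ⊗ A† ⊗ I_Z)(I_X ⊗ I_Y ⊗ |Φ^+⟩), where S is the swap on C^{d_X} ⊗ C^{d_X} and |Φ^+⟩ = Σ_i |ii⟩ on C^{d_Z} ⊗ C^{d_Z}; consequently ‖Λ_F^{T1}‖_∞ ≤ ‖A‖_∞². -/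

import Mathlib

open Matrix MeasureTheory
open scoped Kronecker ComplexOrder

/-- Operator (spectral) norm of a complex matrix. -/
noncomputable def opNorm {m n : Type*} [Fintype m] [Fintype n] [DecidableEq n]
    (A : Matrix m n ℂ) : ℝ :=
  ‖(Matrix.toEuclideanLin A).toContinuousLinearMap‖

/-- Choi matrix `Λ_N = Σ_{ij} |i⟩⟨j| ⊗ N(|i⟩⟨j|)`. -/
noncomputable def choi {ι κ : Type*} [Fintype ι] [DecidableEq ι]
    (N : Matrix ι ι ℂ →ₗ[ℂ] Matrix κ κ ℂ) : Matrix (ι × κ) (ι × κ) ℂ :=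
  fun p q => N (Matrix.single p.1 q.1 1) p.2 q.2

/-- Partial transpose on the first tensor factor. -/
def ptrans1 {ι κ : Type*} (M : Matrix (ι × κ) (ι × κ) ℂ) : Matrix (ι × κ) (ι × κ) ℂ :=
  fun p q => M (q.1, p.2) (p.1, q.2)

/-- Partially transposed Choi matrix `Λ_N^{T1}`. -/
noncomputable def choiT1 {ι κ : Type*} [Fintype ι] [DecidableEq ι]
    (N : Matrix ι ι ℂ →ₗ[ℂ] Matrix κ κ ℂ) : Matrix (ι × κ) (ι × κ) ℂ :=
  ptrans1 (choi N)

/-- The swap operator `S(u ⊗ v) = v ⊗ u` as a matrix. -/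
def swapOp (ι : Type*) [DecidableEq ι] : Matrix (ι × ι) (ι × ι) ℂ :=
  fun p q => if p.1 = q.2 ∧ p.2 = q.1 then 1 else 0

section AuxNorm

open scoped Matrix.Norms.L2Operator

lemma aux_opNorm_eq_l2 {m n : Type*} [Fintype m] [Fintype n] [DecidableEq n]
    (A : Matrix m n ℂ) : opNorm A = ‖A‖ := rfl

lemma aux_norm_matrix_le_of_forall {m n : Type*} [Fintype m] [Fintype n] [DecidableEq n]
    (B : Matrix m n ℂ) (c : ℝ) (hc : 0 ≤ c)
    (h : ∀ x : EuclideanSpace ℂ n, ‖(EuclideanSpace.equiv m ℂ).symm (B *ᵥ x)‖ ≤ c * ‖x‖) :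
    ‖B‖ ≤ c := by
  rw [Matrix.l2_opNorm_def]
  refine ContinuousLinearMap.opNorm_le_bound _ hc fun x => ?_
  simpa [Matrix.toEuclideanLin_apply] using h x

lemma aux_norm_submatrix_le {m n : Type*} [Fintype m] [Fintype n] [DecidableEq n] [DecidableEq m]
    (σ : Equiv.Perm m) (M : Matrix m n ℂ) : ‖M.submatrix σ id‖ ≤ ‖M‖ := by
  refine aux_norm_matrix_le_of_forall _ _ (norm_nonneg _) fun x => ?_
  refine le_trans (le_of_eq ?_) (Matrix.l2_opNorm_mulVec M x)
  rw [EuclideanSpace.norm_eq, EuclideanSpace.norm_eq]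
  congr 1
  have h1 : ∀ i, ((EuclideanSpace.equiv m ℂ).symm (M.submatrix σ id *ᵥ x)) i
      = ((EuclideanSpace.equiv m ℂ).symm (M *ᵥ x)) (σ i) := fun i => rfl
  calc ∑ i, ‖((EuclideanSpace.equiv m ℂ).symm (M.submatrix σ id *ᵥ x)) i‖^2
      = ∑ i, ‖((EuclideanSpace.equiv m ℂ).symm (M *ᵥ x)) (σ i)‖^2 :=
        Finset.sum_congr rfl fun i _ => by rw [h1]
    _ = ∑ i, ‖((EuclideanSpace.equiv m ℂ).symm (M *ᵥ x)) i‖^2 :=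
        Equiv.sum_comp σ (fun i => ‖((EuclideanSpace.equiv m ℂ).symm (M *ᵥ x)) i‖^2)

lemma aux_norm_kron_id_le {m n p : Type*} [Fintype m] [Fintype n] [Fintype p]
    [DecidableEq n] [DecidableEq p]
    (A : Matrix m n ℂ) (B : Matrix (m × p) (n × p) ℂ)
    (hB : ∀ r c, B r c = if r.2 = c.2 then A r.1 c.1 else 0) : ‖B‖ ≤ ‖A‖ := by
  refine aux_norm_matrix_le_of_forall _ _ (norm_nonneg _) fun x => ?_
  have key : ∀ j : p, ∀ i : m, (B *ᵥ x) (i, j) =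
      (A *ᵥ ((WithLp.equiv 2 (n → ℂ)).symm (fun k => x (k, j)) : EuclideanSpace ℂ n)) i := by
    intro j i
    simp only [Matrix.mulVec, dotProduct, hB, Fintype.sum_prod_type]
    rw [Finset.sum_comm]
    simp
  rw [EuclideanSpace.norm_eq]
  have hrhs : (‖A‖ * ‖x‖) = Real.sqrt ((‖A‖ * ‖x‖)^2) := (Real.sqrt_sq (by positivity)).symm
  rw [hrhs]
  apply Real.sqrt_le_sqrt
  calc ∑ i : m × p, ‖(EuclideanSpace.equiv (m × p) ℂ).symm (B *ᵥ x) i‖ ^ 2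
      = ∑ j : p, ∑ i : m, ‖(A *ᵥ ((WithLp.equiv 2 (n → ℂ)).symm
          (fun k => x (k, j)) : EuclideanSpace ℂ n)) i‖^2 := by
        rw [Fintype.sum_prod_type, Finset.sum_comm]
        refine Finset.sum_congr rfl fun j _ => Finset.sum_congr rfl fun i _ => ?_
        have h0 : ((EuclideanSpace.equiv (m × p) ℂ).symm (B *ᵥ x)) (i, j) = (B *ᵥ x) (i, j) := rfl
        rw [h0, key j i]
    _ ≤ ∑ j : p, (‖A‖ * ‖((WithLp.equiv 2 (n → ℂ)).symm
          (fun k => x (k, j)) : EuclideanSpace ℂ n)‖)^2 := by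
        refine Finset.sum_le_sum fun j _ => ?_
        have h1 := Matrix.l2_opNorm_mulVec A ((WithLp.equiv 2 (n → ℂ)).symm (fun k => x (k, j)))
        have h2 : ‖(EuclideanSpace.equiv m ℂ).symm (A *ᵥ ((WithLp.equiv 2 (n → ℂ)).symm
            (fun k => x (k, j)) : EuclideanSpace ℂ n))‖^2
            = ∑ i : m, ‖(A *ᵥ ((WithLp.equiv 2 (n → ℂ)).symm
              (fun k => x (k, j)) : EuclideanSpace ℂ n)) i‖^2 := by
          rw [EuclideanSpace.norm_eq, Real.sq_sqrt (by positivity)]; rfl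
        rw [← h2]
        exact pow_le_pow_left₀ (norm_nonneg _) h1 2
    _ ≤ (‖A‖ * ‖x‖)^2 := by
        simp only [mul_pow]
        rw [← Finset.mul_sum]
        refine mul_le_mul_of_nonneg_left ?_ (by positivity)
        rw [EuclideanSpace.norm_eq, Real.sq_sqrt (by positivity)]
        rw [Fintype.sum_prod_type, Finset.sum_comm]
        refine le_of_eq (Finset.sum_congr rfl fun j _ => ?_)
        rw [EuclideanSpace.norm_eq, Real.sq_sqrt (by positivity)]
        rfl

end AuxNorm

/-- for `F(ρ) = Tr_Z(A ρ A†)` with `A : ℂ^{d_X} → ℂ^{d_Y} ⊗ ℂ^{d_Z}`,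
`Λ_F^{T1} = (I_X ⊗ I_Y ⊗ ⟨Φ⁺|)(I_X ⊗ A ⊗ I_Z)(S ⊗ I_Z)(I_X ⊗ A† ⊗ I_Z)(I_X ⊗ I_Y ⊗ |Φ⁺⟩)`,
and consequently `‖Λ_F^{T1}‖_∞ ≤ ‖A‖_∞²`. -/
theorem choiT1_stinespring {dX dY dZ : ℕ}
    (A : Matrix (Fin dY × Fin dZ) (Fin dX) ℂ)
    (F : Matrix (Fin dX) (Fin dX) ℂ →ₗ[ℂ] Matrix (Fin dY) (Fin dY) ℂ)
    (hF : ∀ ρ, F ρ = Matrix.of fun y y' => ∑ z : Fin dZ, (A * ρ * Aᴴ) (y, z) (y', z))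
    -- `L = I_X ⊗ I_Y ⊗ ⟨Φ⁺|`
    (L : Matrix (Fin dX × Fin dY) (Fin dX × Fin dY × Fin dZ × Fin dZ) ℂ)
    (hL : ∀ p q, L p q =
      if p.1 = q.1 ∧ p.2 = q.2.1 ∧ q.2.2.1 = q.2.2.2 then 1 else 0)
    -- `M₁ = I_X ⊗ A ⊗ I_Z`
    (M₁ : Matrix (Fin dX × Fin dY × Fin dZ × Fin dZ) (Fin dX × Fin dX × Fin dZ) ℂ)
    (hM₁ : ∀ p q, M₁ p q =
      if p.1 = q.1 ∧ p.2.2.2 = q.2.2 then A (p.2.1, p.2.2.1) q.2.1 else 0)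
    -- `Mid = S ⊗ I_Z`, with `S` the swap on `ℂ^{d_X} ⊗ ℂ^{d_X}`
    (Mid : Matrix (Fin dX × Fin dX × Fin dZ) (Fin dX × Fin dX × Fin dZ) ℂ)
    (hMid : ∀ p q, Mid p q =
      if p.1 = q.2.1 ∧ p.2.1 = q.1 ∧ p.2.2 = q.2.2 then 1 else 0)
    -- `M₂ = I_X ⊗ A† ⊗ I_Z`
    (M₂ : Matrix (Fin dX × Fin dX × Fin dZ) (Fin dX × Fin dY × Fin dZ × Fin dZ) ℂ)
    (hM₂ : ∀ p q, M₂ p q =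
      if p.1 = q.1 ∧ p.2.2 = q.2.2.2 then star (A (q.2.1, q.2.2.1) p.2.1) else 0)
    -- `Rm = I_X ⊗ I_Y ⊗ |Φ⁺⟩`
    (Rm : Matrix (Fin dX × Fin dY × Fin dZ × Fin dZ) (Fin dX × Fin dY) ℂ)
    (hRm : ∀ p q, Rm p q =
      if p.1 = q.1 ∧ p.2.1 = q.2 ∧ p.2.2.1 = p.2.2.2 then 1 else 0) :
    choiT1 F = L * M₁ * Mid * M₂ * Rm ∧ opNorm (choiT1 F) ≤ opNorm A ^ 2 := by
  -- The common closed form of both sides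
  have hΛ : ∀ p q : Fin dX × Fin dY,
      choiT1 F p q = ∑ z : Fin dZ, A (p.2, z) q.1 * star (A (q.2, z) p.1) := by
    intro p q
    simp only [choiT1, ptrans1, choi, hF, Matrix.of_apply]
    refine Finset.sum_congr rfl fun z _ => ?_
    simp only [Matrix.mul_apply, Matrix.single, Matrix.conjTranspose_apply,
      Matrix.of_apply, ite_mul, mul_ite, mul_zero, zero_mul, mul_one, ite_and,
      Finset.sum_ite_eq, Finset.sum_ite_eq', Finset.mem_univ, if_true]
  -- The five-fold product has the same closed form
  have h1 : ∀ p (q : Fin dX × Fin dX × Fin dZ), (L * M₁) p q =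
      if p.1 = q.1 then A (p.2, q.2.2) q.2.1 else 0 := by
    intro p q
    simp only [Matrix.mul_apply, hL, hM₁, Fintype.sum_prod_type, ite_mul, mul_ite, one_mul,
      zero_mul, mul_zero, ite_and, Finset.sum_ite_eq, Finset.sum_ite_eq', Finset.mem_univ,
      if_true, Finset.sum_ite_irrel, Finset.sum_const_zero]
  have h2 : ∀ p (q : Fin dX × Fin dX × Fin dZ), (L * M₁ * Mid) p q =
      if p.1 = q.2.1 then A (p.2, q.2.2) q.1 else 0 := by
    intro p q
    simp only [Matrix.mul_apply, h1, hMid, Fintype.sum_prod_type, ite_mul, mul_ite, mul_one,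
      zero_mul, mul_zero, ite_and, Finset.sum_ite_eq, Finset.sum_ite_eq', Finset.mem_univ,
      if_true, Finset.sum_ite_irrel, Finset.sum_const_zero]
  have h3 : ∀ p (q : Fin dX × Fin dY × Fin dZ × Fin dZ), (L * M₁ * Mid * M₂) p q =
      A (p.2, q.2.2.2) q.1 * star (A (q.2.1, q.2.2.1) p.1) := by
    intro p q
    simp only [Matrix.mul_apply, h2, hM₂, Fintype.sum_prod_type, ite_mul, mul_ite,
      zero_mul, mul_zero, ite_and, Finset.sum_ite_eq, Finset.sum_ite_eq', Finset.mem_univ,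
      if_true, Finset.sum_ite_irrel, Finset.sum_const_zero]
  have hprod : ∀ p q : Fin dX × Fin dY,
      (L * M₁ * Mid * M₂ * Rm) p q = ∑ z : Fin dZ, A (p.2, z) q.1 * star (A (q.2, z) p.1) := by
    intro p q
    simp only [Matrix.mul_apply, h3, hRm, Fintype.sum_prod_type, ite_mul, mul_ite, mul_one,
      zero_mul, mul_zero, ite_and, Finset.sum_ite_eq, Finset.sum_ite_eq', Finset.mem_univ,
      if_true, Finset.sum_ite_irrel, Finset.sum_const_zero]
  constructor
  · ext p q
    rw [hΛ, hprod]
  -- Norm bound via the factorization `Λ^{T1} = Pᴴ · (P ∘ σ)`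
  · open scoped Matrix.Norms.L2Operator in
    set P : Matrix ((Fin dY × Fin dZ) × Fin dY) (Fin dX × Fin dY) ℂ :=
      fun r c => if r.2 = c.2 then A r.1 c.1 else 0 with hPdef
    have hP : ∀ r c, P r c = if r.2 = c.2 then A r.1 c.1 else 0 := fun r c => rfl
    set σ : Equiv.Perm ((Fin dY × Fin dZ) × Fin dY) :=
      Function.Involutive.toPerm (fun r => ((r.2, r.1.2), r.1.1)) (fun r => rfl) with hσdef
    have hfact : choiT1 F = Pᴴ * P.submatrix σ id := by
      ext p q
      rw [hΛ]
      simp only [hσdef, Matrix.mul_apply, Matrix.submatrix_apply, Matrix.conjTranspose_apply, hP,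
        Function.Involutive.coe_toPerm, id_eq, Fintype.sum_prod_type, ite_mul, mul_ite, zero_mul,
        mul_zero, apply_ite (star : ℂ → ℂ), star_zero, ite_and, Finset.sum_ite_eq,
        Finset.sum_ite_eq', Finset.mem_univ, if_true, Finset.sum_ite_irrel, Finset.sum_const_zero]
      simp only [Function.Involutive.toPerm, Equiv.coe_fn_mk, ite_and, Finset.sum_ite_eq,
        Finset.sum_ite_eq', Finset.mem_univ, if_true, Finset.sum_ite_irrel, Finset.sum_const_zero]
      rw [Fintype.sum_eq_single q.2 (fun x hx => by simp [hx])]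
      simp only [eq_self_iff_true, if_true, Finset.sum_ite_eq', Finset.mem_univ]
      exact (Finset.sum_congr rfl fun z _ => mul_comm _ _).symm
    have hPA : ‖P‖ ≤ ‖A‖ := aux_norm_kron_id_le A P hP
    calc opNorm (choiT1 F) = ‖Pᴴ * P.submatrix σ id‖ := by
          rw [aux_opNorm_eq_l2, hfact]
      _ ≤ ‖Pᴴ‖ * ‖P.submatrix σ id‖ := Matrix.l2_opNorm_mul _ _
      _ ≤ ‖A‖ * ‖A‖ := by
          refine mul_le_mul ?_ ?_ (norm_nonneg _) (norm_nonneg _)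
          · rw [Matrix.l2_opNorm_conjTranspose]; exact hPA
          · exact le_trans (aux_norm_submatrix_le σ P) hPA
      _ = opNorm A ^ 2 := by rw [aux_opNorm_eq_l2, sq]
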